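/- Let A be a countably infinite alphabet, P a probability distribution on A, D a proper dictionary over A, and m a positive integer such that T_m = {α ∈ A^m : no β ∈ D is a prefix of α} is infinite, with enumeration T_m = {α₁, α₂, …}. Define the increasing chain of dictionaries D_{m+1,k} = (D_m \ {α₁,…,α_k}) ∪ ⋃_{i=1}^{k} α_i A for k ≥ 1. Then lim_{k→∞} l̄(D_{m+1,k}) = l̄(D_{m+1}) and lim_{k→∞} H(D_{m+1,k}) = H(D_{m+1}), where l̄(E) = ∑_{α∈E} P(α)|α| and H(E) = -∑_{α∈E} P(α) log₂ P(α), with all sums taken in [0,∞]. -/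

import Mathlib

open scoped ENNReal
open Filter

/-- The probability of a finite string, obtained by extending the
distribution `P` multiplicatively: `P(a₁⋯aₙ) = ∏ᵢ P(aᵢ)`. -/
noncomputable def strProb {A : Type*} (P : PMF A) (l : List A) : ℝ≥0∞ :=
  (l.map fun a => P a).prod

/-- A dictionary is a set of nonempty finite strings. -/
def IsDictionary {A : Type*} (D : Set (List A)) : Prop :=
  ∀ α ∈ D, α ≠ []

/-- A dictionary is proper if no string in it is a (proper) prefix of
another string in it. -/
def IsProper {A : Type*} (D : Set (List A)) : Prop :=
  ∀ α ∈ D, ∀ β ∈ D, α <+: β → α = β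

/-- A dictionary is complete if every infinite sequence over `A` has a
prefix in it. -/
def IsCompleteDict {A : Type*} (D : Set (List A)) : Prop :=
  ∀ x : ℕ → A, ∃ α ∈ D, α = (List.range α.length).map x

/-- The probability that the length-`n` prefix of a random infinite sequence
has some prefix belonging to `D`. -/
noncomputable def prefixProb {A : Type*} (P : PMF A) (D : Set (List A)) (n : ℕ) : ℝ≥0∞ :=
  ∑' γ : {γ : List A // γ.length = n ∧ ∃ β ∈ D, β <+: γ}, strProb P γ

/-- `D` is almost surely complete: under the infinite product measure `P^ℕ`,
the event that an infinite sequence has a prefix in `D` has probability `1`.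
(By continuity from below, this probability is the limit, as `n → ∞`, of the
probability that the length-`n` prefix has a prefix in `D`.) -/
def IsASC {A : Type*} (P : PMF A) (D : Set (List A)) : Prop :=
  Tendsto (prefixProb P D) atTop (nhds 1)

/-- `Tset D n` = strings of length `n` having no prefix in `D`. -/
def Tset {A : Type*} (D : Set (List A)) (n : ℕ) : Set (List A) :=
  {α | α.length = n ∧ ∀ β ∈ D, ¬ β <+: α}

/-- `Dperp D n = {α ∈ D : |α| = n} ∪ Tₙ`. -/
def Dperp {A : Type*} (D : Set (List A)) (n : ℕ) : Set (List A) :=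
  {α ∈ D | α.length = n} ∪ Tset D n

/-- `Dn D n = {α ∈ D : |α| < n} ∪ Dₙ^⊥`. -/
def Dn {A : Type*} (D : Set (List A)) (n : ℕ) : Set (List A) :=
  {α ∈ D | α.length < n} ∪ Dperp D n

/-- The one-letter extensions `αA = {αa : a ∈ A}` of a string `α`. -/
def oneExt {A : Type*} (α : List A) : Set (List A) :=
  {l | ∃ a : A, l = α ++ [a]}

/-- The extension `D[α] = (D \ {α}) ∪ αA` of a dictionary at `α`. -/
def extendDict {A : Type*} (D : Set (List A)) (α : List A) : Set (List A) :=
  (D \ {α}) ∪ oneExt α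

/-- The nonnegative entropy contribution `-p log₂ p ∈ [0,∞]` of a
probability value `p`. -/
noncomputable def entTerm (p : ℝ≥0∞) : ℝ≥0∞ :=
  ENNReal.ofReal (-(p.toReal * Real.logb 2 p.toReal))

/-- The entropy `H(E) = -∑_{α∈E} P(α) log₂ P(α)` of a dictionary, in `[0,∞]`. -/
noncomputable def dictEntropy {A : Type*} (P : PMF A) (E : Set (List A)) : ℝ≥0∞ :=
  ∑' α : E, entTerm (strProb P α)

/-- The average length `l̄(E) = ∑_{α∈E} P(α)|α|` of a dictionary, in `[0,∞]`. -/
noncomputable def avgLen {A : Type*} (P : PMF A) (E : Set (List A)) : ℝ≥0∞ :=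
  ∑' α : E, strProb P α * (α : List A).length

/-- The source entropy `H(P) = -∑_{a∈A} P(a) log₂ P(a)`, in `[0,∞]`. -/
noncomputable def srcEntropy {A : Type*} (P : PMF A) : ℝ≥0∞ :=
  ∑' a : A, entTerm (P a)


lemma tendsto_aux (C : ℝ≥0∞) (u v : ℕ → ℝ≥0∞) (huv : ∀ i, u i ≤ v i) :
    Filter.Tendsto (fun k : ℕ => C + (∑' j, u (j + k)) + ∑ i ∈ Finset.range k, v i)
      atTop (nhds (C + ∑' i, v i)) := by
  rcases eq_or_ne (∑' i, u i) ∞ with htop | htop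
  · have hv_top : ∑' i, v i = ∞ :=
      top_le_iff.mp (htop ▸ ENNReal.tsum_le_tsum huv)
    have hk_top : ∀ k : ℕ, C + (∑' j, u (j + k)) + ∑ i ∈ Finset.range k, v i = ∞ := by
      intro k
      have e2 : ((Finset.range k : Finset ℕ) : Set ℕ)ᶜ = Set.range (fun j : ℕ => j + k) := by
        ext i
        simp only [Set.mem_compl_iff, Finset.coe_range, Set.mem_Iio, not_lt, Set.mem_range]
        constructor
        · intro h; exact ⟨i - k, by omega⟩
        · rintro ⟨j, rfl⟩; omega
      have hsplit : (∑ i ∈ Finset.range k, u i) + ∑' j, u (j + k) = ∑' i, u i := by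
        have h0 := Summable.tsum_add_tsum_compl (f := u) (s := ((Finset.range k : Finset ℕ) : Set ℕ))
          ENNReal.summable ENNReal.summable
        rwa [Finset.tsum_subtype', e2, tsum_range u (fun a b h => by omega)] at h0
      have h1 : (∑ i ∈ Finset.range k, u i) + ∑' j, u (j + k) = ∞ := hsplit.trans htop
      rcases eq_or_ne (∑' j, u (j + k)) ∞ with h2 | h2
      · rw [h2]; simp
      · have h3 : ∑ i ∈ Finset.range k, u i = ∞ := by
          by_contra h4
          exact (ENNReal.add_ne_top.mpr ⟨h4, h2⟩) h1
        have h5 : ∑ i ∈ Finset.range k, v i = ∞ :=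
          top_le_iff.mp (h3 ▸ Finset.sum_le_sum fun i _ => huv i)
        rw [h5]; simp
    simp only [hk_top, hv_top]
    rw [show C + (∞ : ℝ≥0∞) = ∞ by simp]
    exact tendsto_const_nhds
  · have h1 : Tendsto (fun k => ∑' j, u (j + k)) atTop (nhds 0) :=
      ENNReal.tendsto_sum_nat_add u htop
    have h2 : Tendsto (fun k => ∑ i ∈ Finset.range k, v i) atTop (nhds (∑' i, v i)) :=
      ENNReal.tendsto_nat_tsum v
    have h3 := (tendsto_const_nhds (x := C) (f := atTop (α := ℕ))).add h1 |>.add h2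
    simpa using h3

section Key

variable {A : Type*} (D : Set (List A)) (m : ℕ) (e : ℕ → List A)

/-- Generic convergence lemma. -/
theorem key_tendsto
    (hprop : IsProper D)
    (hinj : Function.Injective e)
    (hrange : Set.range e = Tset D m)
    (f : List A → ℝ≥0∞)
    (hle : ∀ i, f (e i) ≤ ∑' a : A, f (e i ++ [a])) :
    Tendsto
      (fun k : ℕ =>
        ∑' α : ((Dn D m \ e '' {i | i < k}) ∪ ⋃ i < k, oneExt (e i) : Set (List A)), f α)
      atTop (nhds (∑' α : (Dn D (m + 1) : Set (List A)), f α)) := by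
  have hmemT : ∀ i, e i ∈ Tset D m := fun i => hrange ▸ Set.mem_range_self i
  have hlen : ∀ i, (e i).length = m := fun i => (hmemT i).1
  have hTD : ∀ α ∈ Tset D m, α ∉ D := fun α hα hαD => hα.2 α hαD (List.prefix_refl α)
  set S : Set (List A) := {α ∈ D | α.length ≤ m} with hS
  -- length facts
  have hlenS : ∀ α ∈ S, α.length ≤ m := fun α hα => hα.2
  have hlenExt : ∀ i, ∀ α ∈ oneExt (e i), α.length = m + 1 := by
    rintro i α ⟨a, rfl⟩
    simp [hlen i]
  -- the injective map enumerating all one-letter extensions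
  set g : ℕ × A → List A := fun p => e p.1 ++ [p.2] with hg
  have hginj : Function.Injective g := by
    rintro ⟨i, a⟩ ⟨j, b⟩ h
    have hl : (e i).length = (e j).length := by rw [hlen i, hlen j]
    obtain ⟨h1, h2⟩ := List.append_inj h hl
    obtain rfl : i = j := hinj h1
    simp_all
  -- Decomposition of `Dn D m`
  have hDnm : Dn D m = S ∪ Set.range e := by
    ext α
    simp only [Dn, Dperp, Set.mem_union, Set.mem_setOf_eq, hrange, hS]
    constructor
    · rintro (⟨h1, h2⟩ | ⟨h1, h2⟩ | h)
      exacts [Or.inl ⟨h1, h2.le⟩, Or.inl ⟨h1, h2.le⟩, Or.inr h]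
    · rintro (⟨h1, h2⟩ | h)
      · rcases lt_or_eq_of_le h2 with h2 | h2
        exacts [Or.inl ⟨h1, h2⟩, Or.inr (Or.inl ⟨h1, h2⟩)]
      · exact Or.inr (Or.inr h)
  -- `S` is disjoint from any image of `e`
  have hdSe : ∀ s : Set ℕ, Disjoint S (e '' s) := by
    intro s
    rw [Set.disjoint_left]
    rintro α ⟨hαD, -⟩ ⟨i, -, rfl⟩
    exact hTD _ (hmemT i) hαD
  -- difference decomposition
  have hdiff : ∀ k : ℕ, Dn D m \ e '' {i | i < k} = S ∪ e '' {i | k ≤ i} := by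
    intro k
    rw [hDnm, Set.union_diff_distrib]
    congr 1
    · exact (hdSe _).sdiff_eq_left
    · rw [← Set.image_univ, ← Set.image_diff hinj]
      congr 1
      ext i
      simp
  -- decomposition of `Dn D (m+1)`
  have hDnm1 : Dn D (m + 1) = S ∪ ⋃ i, oneExt (e i) := by
    ext α
    simp only [Dn, Dperp, Set.mem_union, Set.mem_setOf_eq, Set.mem_iUnion, hS]
    constructor
    · have key : ∀ (hlen1 : α.length = m + 1),
          (∀ β ∈ D, β <+: α → β = α) → ∃ i, α ∈ oneExt (e i) := by
        intro hlen1 hpref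
        have hne : α ≠ [] := by
          intro h; rw [h] at hlen1; simp at hlen1
        have hδ : α.dropLast ∈ Tset D m := by
          constructor
          · rw [List.length_dropLast, hlen1]; rfl
          · intro β hβ hβδ
            have hβα : β <+: α := hβδ.trans (List.dropLast_prefix α)
            have := hpref β hβ hβα
            subst this
            have := hβδ.length_le
            rw [List.length_dropLast, hlen1] at this
            omega
        rw [← hrange] at hδ
        obtain ⟨i, hi⟩ := hδ
        exact ⟨i, α.getLast hne, by rw [hi, List.dropLast_append_getLast hne]⟩
      rintro (⟨h1, h2⟩ | ⟨h1, h2⟩ | ⟨h1, h2⟩)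
      · exact Or.inl ⟨h1, by omega⟩
      · refine Or.inr (key h2 ?_)
        intro β hβ hβα
        exact hprop β hβ α h1 hβα
      · refine Or.inr (key h1 ?_)
        intro β hβ hβα
        exact absurd hβα (h2 β hβ)
    · rintro (⟨h1, h2⟩ | ⟨i, a, rfl⟩)
      · exact Or.inl ⟨h1, by omega⟩
      · have hlen1 : (e i ++ [a]).length = m + 1 := by simp [hlen i]
        by_cases hD : e i ++ [a] ∈ D
        · exact Or.inr (Or.inl ⟨hD, hlen1⟩)
        · refine Or.inr (Or.inr ⟨hlen1, ?_⟩)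
          intro β hβ hβα
          have hβlen := hβα.length_le
          rw [hlen1] at hβlen
          rcases Nat.lt_or_ge β.length (m + 1) with hb | hb
          · have hβe : β <+: e i := by
              refine List.prefix_of_prefix_length_le hβα (List.prefix_append _ _) ?_
              rw [hlen i]; omega
            exact (hmemT i).2 β hβ hβe
          · have : β = e i ++ [a] := hβα.eq_of_length (by omega)
            exact hD (this ▸ hβ)
  -- sum over images of e
  have hsum_img : ∀ s : Set ℕ, ∑' α : (e '' s : Set (List A)), f α = ∑' i : s, f (e i) :=
    fun s => tsum_image f (hinj.injOn)
  -- sum over the full union of extensions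
  have hUnion_range : (⋃ i, oneExt (e i)) = Set.range g := by
    ext α
    simp only [Set.mem_iUnion, Set.mem_range, oneExt, Set.mem_setOf_eq, Prod.exists, hg]
    constructor
    · rintro ⟨i, a, rfl⟩; exact ⟨i, a, rfl⟩
    · rintro ⟨i, a, rfl⟩; exact ⟨i, a, rfl⟩
  have hsum_union : ∑' α : (⋃ i, oneExt (e i) : Set (List A)), f α
      = ∑' i, ∑' a : A, f (e i ++ [a]) := by
    rw [hUnion_range, tsum_range f hginj, ENNReal.tsum_prod']
  -- sum over a single oneExt
  have hsum_one : ∀ i, ∑' α : (oneExt (e i) : Set (List A)), f α = ∑' a : A, f (e i ++ [a]) := by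
    intro i
    have h1 : oneExt (e i) = Set.range (fun a : A => e i ++ [a]) := by
      ext α; simp [oneExt, eq_comm]
    have h2 : Function.Injective (fun a : A => e i ++ [a]) := by
      intro a b h; simpa using h
    rw [h1, tsum_range f h2]
  -- sum over finite unions of extensions
  have hsum_fin : ∀ k : ℕ, ∑' α : (⋃ i < k, oneExt (e i) : Set (List A)), f α
      = ∑ i ∈ Finset.range k, ∑' a : A, f (e i ++ [a]) := by
    intro k
    have hk : (⋃ i < k, oneExt (e i)) = ⋃ i ∈ Finset.range k, oneExt (e i) := by
      simp
    rw [hk, Summable.tsum_finset_bUnion_disjoint ?_ (fun i _ => ENNReal.summable)]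
    · exact Finset.sum_congr rfl fun i _ => hsum_one i
    · intro i _ j _ hij
      rw [Function.onFun, Set.disjoint_left]
      rintro α ⟨a, rfl⟩ ⟨b, hb⟩
      exact hij (congrArg Prod.fst (hginj (show g (i, a) = g (j, b) from hb)))
  -- disjointness for splitting sums
  have hdisj2 : ∀ s : Set ℕ, ∀ k : ℕ,
      Disjoint (S ∪ e '' s) (⋃ i < k, oneExt (e i)) := by
    intro s k
    rw [Set.disjoint_left]
    rintro α (hα | ⟨i, -, rfl⟩) hmem
    · obtain ⟨j, -, hj⟩ := Set.mem_iUnion₂.mp hmem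
      have := hlenExt j α hj
      have := hlenS α hα
      omega
    · obtain ⟨j, -, hj⟩ := Set.mem_iUnion₂.mp hmem
      have := hlenExt j _ hj
      have := hlen i
      omega
  have hdisj3 : Disjoint S (⋃ i, oneExt (e i)) := by
    rw [Set.disjoint_left]
    rintro α hα hmem
    obtain ⟨j, hj⟩ := Set.mem_iUnion.mp hmem
    have := hlenExt j α hj
    have := hlenS α hα
    omega
  -- abbreviations
  set C : ℝ≥0∞ := ∑' α : S, f α with hC
  set u : ℕ → ℝ≥0∞ := fun i => f (e i) with hu
  set v : ℕ → ℝ≥0∞ := fun i => ∑' a : A, f (e i ++ [a]) with hv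
  -- value of the limit sum
  have hlim : ∑' α : (Dn D (m + 1) : Set (List A)), f α = C + ∑' i, v i := by
    rw [hDnm1, Summable.tsum_union_disjoint hdisj3 ENNReal.summable ENNReal.summable, hsum_union]
  -- value of the k-th sum
  have hstep : ∀ k : ℕ,
      (∑' α : ((Dn D m \ e '' {i | i < k}) ∪ ⋃ i < k, oneExt (e i) : Set (List A)), f α)
        = C + (∑' j, u (j + k)) + ∑ i ∈ Finset.range k, v i := by
    intro k
    rw [hdiff k,
      Summable.tsum_union_disjoint (hdisj2 _ k) ENNReal.summable ENNReal.summable,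
      Summable.tsum_union_disjoint (hdSe _) ENNReal.summable ENNReal.summable,
      hsum_img, hsum_fin]
    congr 1
    have : {i : ℕ | k ≤ i} = Set.range (fun j : ℕ => j + k) := by
      ext i
      simp only [Set.mem_setOf_eq, Set.mem_range]
      constructor
      · intro h; exact ⟨i - k, by omega⟩
      · rintro ⟨j, rfl⟩; omega
    rw [this, tsum_range (fun i => f (e i)) (fun a b h => by omega)]
  rw [hlim]
  exact (tendsto_aux C u v hle).congr fun k => (hstep k).symm

end Key

lemma strProb_append_singleton {A : Type*} (P : PMF A) (l : List A) (a : A) :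
    strProb P (l ++ [a]) = strProb P l * P a := by
  simp [strProb]

lemma strProb_le_one {A : Type*} (P : PMF A) (l : List A) : strProb P l ≤ 1 := by
  induction l with
  | nil => simp [strProb]
  | cons a l ih =>
    have : strProb P (a :: l) = P a * strProb P l := by simp [strProb]
    rw [this]
    exact mul_le_one' (P.coe_le_one a) ih

lemma entTerm_mul_le {p q : ℝ≥0∞} (hp : p ≤ 1) (hq : q ≤ 1) :
    entTerm p * q ≤ entTerm (p * q) := by
  have hp' : p ≠ ∞ := (hp.trans_lt (by norm_num)).ne
  have hq' : q ≠ ∞ := (hq.trans_lt (by norm_num)).ne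
  set x := p.toReal with hx
  set y := q.toReal with hy
  have hx0 : 0 ≤ x := ENNReal.toReal_nonneg
  have hy0 : 0 ≤ y := ENNReal.toReal_nonneg
  have hx1 : x ≤ 1 := by
    have := ENNReal.toReal_mono (by norm_num) hp; simpa using this
  have hy1 : y ≤ 1 := by
    have := ENNReal.toReal_mono (by norm_num) hq; simpa using this
  have hr : 0 ≤ -(x * Real.logb 2 x) := by
    have : Real.logb 2 x ≤ 0 := Real.logb_nonpos (by norm_num) hx0 hx1
    nlinarith
  have hqq : q = ENNReal.ofReal y := (ENNReal.ofReal_toReal hq').symm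
  have hmul : (p * q).toReal = x * y := ENNReal.toReal_mul
  rw [entTerm, entTerm, hmul, hqq, ← ENNReal.ofReal_mul hr]
  apply ENNReal.ofReal_le_ofReal
  rcases eq_or_lt_of_le hx0 with hx0' | hx0'
  · simp [← hx0']
  rcases eq_or_lt_of_le hy0 with hy0' | hy0'
  · simp [← hy0']
  have hlog : Real.logb 2 (x * y) = Real.logb 2 x + Real.logb 2 y :=
    Real.logb_mul hx0'.ne' hy0'.ne'
  have hly : Real.logb 2 y ≤ 0 := Real.logb_nonpos (by norm_num) hy0 hy1
  have : x * y * Real.logb 2 y ≤ 0 :=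
    mul_nonpos_of_nonneg_of_nonpos (mul_nonneg hx0 hy0) hly
  rw [hlog]
  nlinarith

lemma entTerm_le_tsum {A : Type*} (P : PMF A) {p : ℝ≥0∞} (hp : p ≤ 1) :
    entTerm p ≤ ∑' a : A, entTerm (p * P a) := by
  calc entTerm p = entTerm p * ∑' a : A, P a := by rw [P.tsum_coe, mul_one]
    _ = ∑' a : A, entTerm p * P a := ENNReal.tsum_mul_left.symm
    _ ≤ ∑' a : A, entTerm (p * P a) :=
        ENNReal.tsum_le_tsum fun a => entTerm_mul_le hp (P.coe_le_one a)


/-- Over a countably infinite alphabet, if `D` is proper and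
`T_m` is infinite with enumeration `T_m = {α₁, α₂, …}` (given by an injection
`e : ℕ → List A` with range `T_m`), then for the chain
`D_{m+1,k} = (D_m \ {α₁,…,α_k}) ∪ ⋃_{i=1}^k αᵢA` one has
`lim_{k→∞} l̄(D_{m+1,k}) = l̄(D_{m+1})` and
`lim_{k→∞} H(D_{m+1,k}) = H(D_{m+1})`. -/
theorem tendsto_avgLen_and_dictEntropy_extension_chain {A : Type*}
    [Countable A] [Infinite A] (P : PMF A) (D : Set (List A))
    (hdict : IsDictionary D) (hprop : IsProper D) (m : ℕ) (hm : 0 < m)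
    (e : ℕ → List A) (hinj : Function.Injective e)
    (hrange : Set.range e = Tset D m) :
    Tendsto
      (fun k : ℕ =>
        avgLen P ((Dn D m \ e '' {i | i < k}) ∪ ⋃ i < k, oneExt (e i)))
      atTop (nhds (avgLen P (Dn D (m + 1)))) ∧
    Tendsto
      (fun k : ℕ =>
        dictEntropy P ((Dn D m \ e '' {i | i < k}) ∪ ⋃ i < k, oneExt (e i)))
      atTop (nhds (dictEntropy P (Dn D (m + 1)))) := by
  have hlen : ∀ i, (e i).length = m := fun i =>
    (show e i ∈ Tset D m from hrange ▸ Set.mem_range_self i).1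
  constructor
  · refine key_tendsto D m e hprop hinj hrange
      (fun l => strProb P l * (l.length : ℝ≥0∞)) ?_
    intro i
    have hsum : ∑' a : A, strProb P (e i ++ [a]) * (((e i ++ [a]).length : ℕ) : ℝ≥0∞)
        = strProb P (e i) * ((m : ℝ≥0∞) + 1) := by
      have h1 : ∀ a : A, strProb P (e i ++ [a]) * (((e i ++ [a]).length : ℕ) : ℝ≥0∞)
          = (strProb P (e i) * ((m : ℝ≥0∞) + 1)) * P a := by
        intro a
        rw [strProb_append_singleton]
        have : (((e i ++ [a]).length : ℕ) : ℝ≥0∞) = (m : ℝ≥0∞) + 1 := by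
          simp [hlen i]
        rw [this]
        ring
      rw [tsum_congr h1, ENNReal.tsum_mul_left, P.tsum_coe, mul_one]
    rw [hsum]
    simp only [hlen i]
    exact mul_le_mul_right le_self_add _
  · refine key_tendsto D m e hprop hinj hrange
      (fun l => entTerm (strProb P l)) ?_
    intro i
    have h1 : ∀ a : A, entTerm (strProb P (e i ++ [a])) = entTerm (strProb P (e i) * P a) :=
      fun a => by rw [strProb_append_singleton]
    rw [tsum_congr h1]
    exact entTerm_le_tsum P (strProb_le_one P (e i))
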